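/- arXiv:2511.00436 — 3 statements merged into one kernel-verified Lean document; each statement's English description precedes it below -/
import Mathlib

section
/- Suppose every vertex of G has degree at least 2, and define the masked score matrix S^add by S^add_{u,i} = s^user_{u,i} if R_{u,i} = 0 and S^add_{u,i} = 0 if R_{u,i} = 1. Then the support of R is contained in the support of R Rᵀ R, and the number of nonzero entries of S^add equals NNZ(R Rᵀ R) − NNZ(R), where NNZ counts the nonzero entries of a matrix. -/
open Matrix

/-!
Users are the type `U`, items the type `I`, and the bipartite interaction graph `G`
lives on the disjoint union `U ⊕ I`.
-/

/-- The Adamic–Adar score `AA(x,y) = Σ_{k ∈ N(x) ∩ N(y)} 1 / log d(k)`. -/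
noncomputable def adamicAdar {V : Type*} [Fintype V] [DecidableEq V]
    (G : SimpleGraph V) [DecidableRel G.Adj] (x y : V) : ℝ :=
  ∑ k ∈ G.neighborFinset x ∩ G.neighborFinset y, 1 / Real.log (G.degree k : ℝ)

/-- The user-based effectiveness score
`s^user_{u,i} = (1/d(i)) · Σ_{v ∈ N(i)} AA(u,v)`. -/
noncomputable def sUser {U I : Type*} [Fintype U] [Fintype I] [DecidableEq U] [DecidableEq I]
    (G : SimpleGraph (U ⊕ I)) [DecidableRel G.Adj] (u : U) (i : I) : ℝ :=
  (1 / (G.degree (Sum.inr i) : ℝ)) *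
    ∑ v ∈ Finset.univ.filter (fun v : U => G.Adj (Sum.inr i) (Sum.inl v)),
      adamicAdar G (Sum.inl u) (Sum.inl v)

/-- The relation matrix `R ∈ {0,1}^{U×I}` with `R_{u,i} = 1` exactly when `{u,i}`
is an edge of `G`. -/
noncomputable def relMat {U I : Type*} [Fintype U] [Fintype I]
    (G : SimpleGraph (U ⊕ I)) [DecidableRel G.Adj] : Matrix U I ℝ :=
  fun u i => if G.Adj (Sum.inl u) (Sum.inr i) then 1 else 0

/-- The masked score matrix `S^add`: `S^add_{u,i} = s^user_{u,i}` if `R_{u,i} = 0`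
and `S^add_{u,i} = 0` if `R_{u,i} = 1`. -/
noncomputable def sAdd {U I : Type*} [Fintype U] [Fintype I] [DecidableEq U] [DecidableEq I]
    (G : SimpleGraph (U ⊕ I)) [DecidableRel G.Adj] : Matrix U I ℝ :=
  fun u i => if relMat G u i = 0 then sUser G u i else 0

open Classical in
/-- `NNZ M` is the number of nonzero entries of the matrix `M`. -/
noncomputable def NNZ {m n : Type*} [Fintype m] [Fintype n] (M : Matrix m n ℝ) : ℕ :=
  (Finset.univ.filter (fun p : m × n => M p.1 p.2 ≠ 0)).card

private lemma sum_ne_zero_iff' {α : Type*} {s : Finset α} {f : α → ℝ}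
    (h : ∀ x ∈ s, 0 ≤ f x) :
    (∑ x ∈ s, f x) ≠ 0 ↔ ∃ x ∈ s, f x ≠ 0 := by
  rw [← not_iff_not, not_not]
  push_neg
  exact Finset.sum_eq_zero_iff_of_nonneg h

section Main
variable {U I : Type*} [Fintype U] [Fintype I] [DecidableEq U] [DecidableEq I]
    (G : SimpleGraph (U ⊕ I)) [DecidableRel G.Adj]

private lemma relMat_ne_zero_iff (u : U) (i : I) :
    relMat G u i ≠ 0 ↔ G.Adj (Sum.inl u) (Sum.inr i) := by
  simp only [relMat]
  split <;> simp_all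

private lemma triple_ne_zero_iff (u : U) (i : I) :
    (relMat G * (relMat G)ᵀ * relMat G) u i ≠ 0 ↔
      ∃ v j, G.Adj (Sum.inl u) (Sum.inr j) ∧ G.Adj (Sum.inl v) (Sum.inr j) ∧
        G.Adj (Sum.inl v) (Sum.inr i) := by
  have hexp : (relMat G * (relMat G)ᵀ * relMat G) u i =
      ∑ v : U, ∑ j : I, relMat G u j * relMat G v j * relMat G v i := by
    simp only [Matrix.mul_apply, Matrix.transpose_apply, Finset.sum_mul]
  have hnn : ∀ (v : U) (j : I), 0 ≤ relMat G u j * relMat G v j * relMat G v i := by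
    intro v j
    simp only [relMat]
    split <;> split <;> split <;> norm_num
  rw [hexp]
  rw [sum_ne_zero_iff' (fun v _ => Finset.sum_nonneg fun j _ => hnn v j)]
  constructor
  · rintro ⟨v, -, hv⟩
    rw [sum_ne_zero_iff' (fun j _ => hnn v j)] at hv
    obtain ⟨j, -, hj⟩ := hv
    refine ⟨v, j, ?_⟩
    simp only [relMat, mul_ne_zero_iff] at hj
    refine ⟨?_, ?_, ?_⟩ <;> [skip; skip; skip]
    · by_contra h; simp [h] at hj
    · by_contra h; simp [h] at hj
    · by_contra h; simp [h] at hj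
  · rintro ⟨v, j, h1, h2, h3⟩
    refine ⟨v, Finset.mem_univ v, ?_⟩
    rw [sum_ne_zero_iff' (fun j _ => hnn v j)]
    exact ⟨j, Finset.mem_univ j, by simp [relMat, h1, h2, h3]⟩

variable (hbip : ∀ x y, G.Adj x y → (x.isLeft ∧ y.isRight) ∨ (x.isRight ∧ y.isLeft))
    (hdeg : ∀ x, 2 ≤ G.degree x)

include hdeg in
private lemma aa_pos (x k : U ⊕ I) : 0 < 1 / Real.log (G.degree k : ℝ) := by
  have h2 : (2 : ℝ) ≤ (G.degree k : ℝ) := by exact_mod_cast hdeg k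
  have : (1 : ℝ) < (G.degree k : ℝ) := by linarith
  exact div_pos one_pos (Real.log_pos this)

include hdeg in
private lemma adamicAdar_nonneg (x y : U ⊕ I) : 0 ≤ adamicAdar G x y :=
  Finset.sum_nonneg fun k _ => le_of_lt (aa_pos G hdeg x k)

include hdeg in
private lemma adamicAdar_ne_zero_iff (x y : U ⊕ I) :
    adamicAdar G x y ≠ 0 ↔ ∃ k, G.Adj x k ∧ G.Adj y k := by
  unfold adamicAdar
  rw [sum_ne_zero_iff' (fun k _ => le_of_lt (aa_pos G hdeg x k))]
  constructor
  · rintro ⟨k, hk, -⟩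
    simp only [Finset.mem_inter, SimpleGraph.mem_neighborFinset] at hk
    exact ⟨k, hk.1, hk.2⟩
  · rintro ⟨k, h1, h2⟩
    refine ⟨k, by simp [SimpleGraph.mem_neighborFinset, h1, h2], (aa_pos G hdeg x k).ne'⟩

include hbip hdeg in
private lemma sUser_ne_zero_iff (u : U) (i : I) :
    sUser G u i ≠ 0 ↔
      ∃ v j, G.Adj (Sum.inl u) (Sum.inr j) ∧ G.Adj (Sum.inl v) (Sum.inr j) ∧
        G.Adj (Sum.inl v) (Sum.inr i) := by
  have hd : (1 / (G.degree (Sum.inr i) : ℝ)) ≠ 0 := by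
    have := hdeg (Sum.inr i); positivity
  unfold sUser
  rw [mul_ne_zero_iff]
  rw [sum_ne_zero_iff' (fun v _ => adamicAdar_nonneg G hdeg _ _)]
  constructor
  · rintro ⟨-, v, hv, haa⟩
    rw [adamicAdar_ne_zero_iff G hdeg] at haa
    obtain ⟨k, h1, h2⟩ := haa
    simp only [Finset.mem_filter] at hv
    obtain ⟨j, rfl⟩ : ∃ j, k = Sum.inr j := by
      rcases hbip _ _ h1 with ⟨-, hr⟩ | ⟨hl, -⟩
      · cases k with
        | inl _ => simp at hr
        | inr j => exact ⟨j, rfl⟩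
      · simp at hl
    exact ⟨v, j, h1, h2, hv.2.symm⟩
  · rintro ⟨v, j, h1, h2, h3⟩
    refine ⟨hd, v, by simp [h3.symm], ?_⟩
    rw [adamicAdar_ne_zero_iff G hdeg]
    exact ⟨Sum.inr j, h1, h2⟩

end Main

/-- If every vertex has degree at least 2, then the support of `R`
is contained in the support of `R Rᵀ R`, and the number of nonzero entries of
`S^add` equals `NNZ(R Rᵀ R) − NNZ(R)`. -/
theorem nnz_sAdd_eq
    {U I : Type*} [Fintype U] [Fintype I] [DecidableEq U] [DecidableEq I]
    (G : SimpleGraph (U ⊕ I)) [DecidableRel G.Adj]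
    (hbip : ∀ x y, G.Adj x y → (x.isLeft ∧ y.isRight) ∨ (x.isRight ∧ y.isLeft))
    (hdeg : ∀ x, 2 ≤ G.degree x) :
    (∀ u : U, ∀ i : I, relMat G u i ≠ 0 →
      (relMat G * (relMat G)ᵀ * relMat G) u i ≠ 0) ∧
    NNZ (sAdd G) = NNZ (relMat G * (relMat G)ᵀ * relMat G) - NNZ (relMat G) := by
  classical
  have hsAdd : ∀ (u : U) (i : I), sAdd G u i ≠ 0 ↔ relMat G u i = 0 ∧ sUser G u i ≠ 0 := by
    intro u i
    simp only [sAdd]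
    split <;> simp_all
  have part1 : ∀ u : U, ∀ i : I, relMat G u i ≠ 0 →
      (relMat G * (relMat G)ᵀ * relMat G) u i ≠ 0 := by
    intro u i h
    rw [relMat_ne_zero_iff] at h
    rw [triple_ne_zero_iff]
    exact ⟨u, i, h, h, h⟩
  refine ⟨part1, ?_⟩
  have key : ∀ p : U × I, (relMat G * (relMat G)ᵀ * relMat G) p.1 p.2 ≠ 0 ↔
      (sAdd G p.1 p.2 ≠ 0 ∨ relMat G p.1 p.2 ≠ 0) := by
    rintro ⟨u, i⟩
    by_cases hR : relMat G u i = 0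
    · rw [triple_ne_zero_iff, hsAdd]
      simp only [hR, true_and, ne_eq, not_true_eq_false, or_false]
      exact (sUser_ne_zero_iff G hbip hdeg u i).symm
    · exact iff_of_true (part1 u i hR) (Or.inr hR)
  unfold NNZ
  have hunion : (Finset.univ.filter
        (fun p : U × I => (relMat G * (relMat G)ᵀ * relMat G) p.1 p.2 ≠ 0)) =
      (Finset.univ.filter (fun p : U × I => sAdd G p.1 p.2 ≠ 0)) ∪
      (Finset.univ.filter (fun p : U × I => relMat G p.1 p.2 ≠ 0)) := by
    ext p
    simp only [Finset.mem_filter, Finset.mem_union, Finset.mem_univ, true_and]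
    exact key p
  have hdisj : Disjoint
      (Finset.univ.filter (fun p : U × I => sAdd G p.1 p.2 ≠ 0))
      (Finset.univ.filter (fun p : U × I => relMat G p.1 p.2 ≠ 0)) := by
    rw [Finset.disjoint_left]
    intro p hp hq
    simp only [Finset.mem_filter, Finset.mem_univ, true_and] at hp hq
    exact hq ((hsAdd p.1 p.2).mp hp).1
  rw [hunion, Finset.card_union_of_disjoint hdisj]
  omega
end

section
/- Suppose every vertex of G has degree at least 2. If u is a user and i is an item such that {u,i} is not an edge of G and the user-based effectiveness score s^user_{u,i} is strictly positive, then u and i are connected in G and their graph distance in G is exactly 3. In other words, every item selected by collaborative edge addition via the user-based score is a 3-hop neighbor of the target user. -/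
/-- Parity of walk length in a bipartite graph on `U ⊕ I`. -/
lemma bip_walk_parity {U I : Type*}
    (G : SimpleGraph (U ⊕ I))
    (hbip : ∀ x y, G.Adj x y → (x.isLeft ∧ y.isRight) ∨ (x.isRight ∧ y.isLeft))
    {x y : U ⊕ I} (p : G.Walk x y) :
    (p.length : ZMod 2) = Sum.elim (fun _ => (0 : ZMod 2)) (fun _ => 1) x
      + Sum.elim (fun _ => (0 : ZMod 2)) (fun _ => 1) y := by
  have h2 : (2 : ZMod 2) = 0 := rfl
  induction p with
  | nil =>
    rename_i z
    cases z <;> simp [h2, ← two_mul]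
  | @cons a b c h p ih =>
    simp only [SimpleGraph.Walk.length_cons, Nat.cast_add, Nat.cast_one, ih]
    rcases hbip a b h with ⟨ha, hb⟩ | ⟨ha, hb⟩ <;> cases a <;> cases b <;>
      simp_all <;> ring_nf <;> simp [h2]

/-- If every vertex has degree at least 2, `{u,i}` is not an edge of
`G`, and `s^user_{u,i}` > 0, then `u` and `i` are connected in `G` and their graph
distance in `G` is exactly 3. -/
theorem dist_eq_three_of_sUser_pos
    {U I : Type*} [Fintype U] [Fintype I] [DecidableEq U] [DecidableEq I]
    (G : SimpleGraph (U ⊕ I)) [DecidableRel G.Adj]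
    (hbip : ∀ x y, G.Adj x y → (x.isLeft ∧ y.isRight) ∨ (x.isRight ∧ y.isLeft))
    (hdeg : ∀ x, 2 ≤ G.degree x)
    (u : U) (i : I)
    (hne : ¬ G.Adj (Sum.inl u) (Sum.inr i))
    (hpos : 0 < sUser G u i) :
    G.Reachable (Sum.inl u) (Sum.inr i) ∧ G.dist (Sum.inl u) (Sum.inr i) = 3 := by
  -- extract a positive summand
  have hsum : 0 < ∑ v ∈ Finset.univ.filter (fun v : U => G.Adj (Sum.inr i) (Sum.inl v)),
      adamicAdar G (Sum.inl u) (Sum.inl v) := by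
    by_contra h
    push_neg at h
    have : sUser G u i ≤ 0 := by
      unfold sUser
      apply mul_nonpos_of_nonneg_of_nonpos _ h
      positivity
    linarith
  obtain ⟨v, hv, hAA'⟩ := Finset.exists_ne_zero_of_sum_ne_zero (ne_of_gt hsum)
  simp only [Finset.mem_filter, Finset.mem_univ, true_and] at hv
  obtain ⟨k, hk⟩ := Finset.exists_ne_zero_of_sum_ne_zero hAA'
  rw [Finset.mem_inter, SimpleGraph.mem_neighborFinset, SimpleGraph.mem_neighborFinset] at hk
  obtain ⟨⟨hk1, hk2⟩, _⟩ := hk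
  -- build the walk u — k — v — i
  let w : G.Walk (Sum.inl u) (Sum.inr i) :=
    (hk1.toWalk.append hk2.symm.toWalk).append hv.symm.toWalk
  have hwlen : w.length = 3 := by
    simp [w]
  have hreach : G.Reachable (Sum.inl u) (Sum.inr i) := ⟨w⟩
  refine ⟨hreach, ?_⟩
  have hle : G.dist (Sum.inl u) (Sum.inr i) ≤ 3 := by
    calc G.dist (Sum.inl u) (Sum.inr i) ≤ w.length := SimpleGraph.dist_le w
    _ = 3 := hwlen
  obtain ⟨p, hp⟩ := hreach.exists_walk_length_eq_dist
  have hpar := bip_walk_parity G hbip p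
  rw [hp] at hpar
  simp only [Sum.elim_inl, Sum.elim_inr, zero_add] at hpar
  have hodd : G.dist (Sum.inl u) (Sum.inr i) % 2 = 1 := by
    have hcast := ZMod.natCast_mod (G.dist (Sum.inl u) (Sum.inr i)) 2
    rw [hpar] at hcast
    rcases Nat.mod_two_eq_zero_or_one (G.dist (Sum.inl u) (Sum.inr i)) with h | h
    · rw [h] at hcast; exact absurd hcast (by decide)
    · exact h
  have hne1 : G.dist (Sum.inl u) (Sum.inr i) ≠ 1 := by
    intro h
    exact hne (SimpleGraph.dist_eq_one_iff_adj.mp h)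
  omega
end

section
/- Suppose every vertex of G has degree at least 2. If u is a user and i is an item such that {u,i} is not an edge of G and the item-based effectiveness score s^item_{u,i} is strictly positive, then u and i are connected in G and their graph distance in G is exactly 3. In other words, every item selected by collaborative edge addition via the item-based score is a 3-hop neighbor of the target user. -/
/-- The item-based effectiveness score
`s^item_{u,i} = (1/d(u)) · Σ_{j ∈ N(u)} AA(i,j)`. -/
noncomputable def sItem {U I : Type*} [Fintype U] [Fintype I] [DecidableEq U] [DecidableEq I]
    (G : SimpleGraph (U ⊕ I)) [DecidableRel G.Adj] (u : U) (i : I) : ℝ :=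
  (1 / (G.degree (Sum.inl u) : ℝ)) *
    ∑ j ∈ Finset.univ.filter (fun j : I => G.Adj (Sum.inl u) (Sum.inr j)),
      adamicAdar G (Sum.inr i) (Sum.inr j)

/-- Parity of walk lengths in a bipartite graph. -/
lemma walk_length_parity {U I : Type*}
    (G : SimpleGraph (U ⊕ I))
    (hbip : ∀ x y, G.Adj x y → (x.isLeft ∧ y.isRight) ∨ (x.isRight ∧ y.isLeft)) :
    ∀ {x y : U ⊕ I} (p : G.Walk x y), (p.length % 2 = 0 ↔ x.isLeft = y.isLeft) := by
  intro x y p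
  induction p with
  | nil => simp
  | cons h q ih =>
    rename_i a b c
    have hab : a.isLeft ≠ b.isLeft := by
      rcases hbip a b h with ⟨h1, h2⟩ | ⟨h1, h2⟩ <;>
        simp_all [Sum.isLeft_iff, Sum.isRight_iff] <;> aesop
    simp only [SimpleGraph.Walk.length_cons]
    constructor
    · intro hl
      have : q.length % 2 = 1 := by omega
      have : ¬ (b.isLeft = c.isLeft) := by
        intro hbc; have := ih.mpr hbc; omega
      cases hA : a.isLeft <;> cases hB : b.isLeft <;> cases hC : c.isLeft <;> simp_all
    · intro hac
      have hbc : b.isLeft ≠ c.isLeft := by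
        cases hA : a.isLeft <;> cases hB : b.isLeft <;> cases hC : c.isLeft <;> simp_all
      have : ¬ (q.length % 2 = 0) := by
        intro h0; exact hbc (ih.mp h0)
      omega

/-- If every vertex has degree at least 2, `{u,i}` is not an edge of
`G`, and `s^item_{u,i} > 0`, then `u` and `i` are connected in `G` and their graph
distance in `G` is exactly 3. -/
theorem dist_eq_three_of_sItem_pos
    {U I : Type*} [Fintype U] [Fintype I] [DecidableEq U] [DecidableEq I]
    (G : SimpleGraph (U ⊕ I)) [DecidableRel G.Adj]
    (hbip : ∀ x y, G.Adj x y → (x.isLeft ∧ y.isRight) ∨ (x.isRight ∧ y.isLeft))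
    (hdeg : ∀ x, 2 ≤ G.degree x)
    (u : U) (i : I)
    (hne : ¬ G.Adj (Sum.inl u) (Sum.inr i))
    (hpos : 0 < sItem G u i) :
    G.Reachable (Sum.inl u) (Sum.inr i) ∧ G.dist (Sum.inl u) (Sum.inr i) = 3 := by
  -- extract a j with nonzero Adamic–Adar score
  have hsum : ∑ j ∈ Finset.univ.filter (fun j : I => G.Adj (Sum.inl u) (Sum.inr j)),
      adamicAdar G (Sum.inr i) (Sum.inr j) ≠ 0 := by
    intro h0
    rw [sItem, h0, mul_zero] at hpos
    exact lt_irrefl 0 hpos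
  obtain ⟨j, hj, hAA⟩ : ∃ j ∈ Finset.univ.filter (fun j : I => G.Adj (Sum.inl u) (Sum.inr j)),
      adamicAdar G (Sum.inr i) (Sum.inr j) ≠ 0 := by
    by_contra hc
    push_neg at hc
    exact hsum (Finset.sum_eq_zero hc)
  have huj : G.Adj (Sum.inl u) (Sum.inr j) := (Finset.mem_filter.mp hj).2
  -- extract a common neighbor k of i and j
  obtain ⟨k, hk⟩ : ∃ k, k ∈ G.neighborFinset (Sum.inr i) ∩ G.neighborFinset (Sum.inr j) := by
    by_contra hc
    push_neg at hc
    apply hAA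
    rw [adamicAdar]
    apply Finset.sum_eq_zero
    intro k hk; exact absurd hk (hc k)
  rw [Finset.mem_inter, SimpleGraph.mem_neighborFinset, SimpleGraph.mem_neighborFinset] at hk
  obtain ⟨hki, hkj⟩ := hk
  -- the walk u → j → k → i
  let p : G.Walk (Sum.inl u) (Sum.inr i) :=
    SimpleGraph.Walk.cons huj
      (SimpleGraph.Walk.cons hkj (SimpleGraph.Walk.cons hki.symm SimpleGraph.Walk.nil))
  have hreach : G.Reachable (Sum.inl u) (Sum.inr i) := ⟨p⟩
  refine ⟨hreach, ?_⟩
  have hle : G.dist (Sum.inl u) (Sum.inr i) ≤ 3 := by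
    have := SimpleGraph.dist_le p
    simpa [p] using this
  -- parity: dist is odd
  obtain ⟨q, hq⟩ := hreach.exists_walk_length_eq_dist
  have hpar := walk_length_parity G hbip q
  simp only [Sum.isLeft] at hpar
  have hodd : G.dist (Sum.inl u) (Sum.inr i) % 2 = 1 := by
    rw [← hq]
    have : ¬ (q.length % 2 = 0) := by
      intro h; have := hpar.mp h; simp at this
    omega
  -- dist ≠ 1 since not adjacent
  have hne1 : G.dist (Sum.inl u) (Sum.inr i) ≠ 1 := by
    intro h1
    exact hne (SimpleGraph.dist_eq_one_iff_adj.mp h1)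
  omega
end
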